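/- Let R be an ℕ-graded locally finite K-algebra, Λ ⊆ R a graded reductor (so K·Λ = R), and S an Ore set in R. Then S' = (K^× · S) ∩ Λ is an Ore set in Λ and the localization (S')^{-1}Λ is isomorphic to S^{-1}R. -/

import Mathlib

/-- The additive subgroup `(f_γ^vK)·S` of a `K`-algebra `R` generated by products `c·s`
with `c ∈ f_γ^vK = {c ∈ K : v c ≥ -γ}` and `s ∈ S`. -/
def scaledSet {K : Type*} (R : Type*) {Γ : Type*} [Field K] [Ring R] [Algebra K R]
    [AddCommGroup Γ] [LinearOrder Γ] [IsOrderedAddMonoid Γ] (v : K → WithTop Γ) (γ : Γ) (S : Set R) : AddSubgroup R :=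
  AddSubgroup.closure {a | ∃ c : K, ∃ s ∈ S, ((-γ : Γ) : WithTop Γ) ≤ v c ∧
    a = algebraMap K R c * s}

/-- `S' = (K^× · S) ∩ Λ`. -/
def oreInter (K : Type*) {R : Type*} [Field K] [Ring R] [Algebra K R]
    (Λ : Subring R) (S : Submonoid R) : Set R :=
  {x : R | x ∈ Λ ∧ ∃ k : K, k ≠ 0 ∧ ∃ s ∈ S, x = algebraMap K R k * s}

/-- Let `R` be an `ℕ`-graded locally finite `K`-algebra, `Λ ⊆ R` a graded reductor
(so `K·Λ = R`), and `S` a (left) Ore set in `R`.  Then `S' = (K^×·S) ∩ Λ` is an Ore set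
in `Λ` (multiplicatively closed, satisfying the left Ore condition in `Λ`) and
`(S')⁻¹Λ ≅ S⁻¹R`: every element of `S'` becomes a unit in `S⁻¹R = R[S⁻¹]` and every
element of `S⁻¹R` is a left fraction of an element of `Λ` by an element of `S'`. -/
theorem stmt17 {K R Γ : Type*} [Field K] [Ring R] [Algebra K R]
    [AddCommGroup Γ] [LinearOrder Γ] [IsOrderedAddMonoid Γ]
    (v : K → WithTop Γ)
    (h0 : ∀ x : K, v x = ⊤ ↔ x = 0)
    (hmul : ∀ x y : K, v (x * y) = v x + v y)
    (hadd : ∀ x y : K, min (v x) (v y) ≤ v (x + y))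
    (hsurj : ∀ γ : Γ, ∃ x : K, v x = (γ : WithTop Γ))
    (𝒜 : ℕ → Submodule K R) [GradedRing 𝒜]
    (hfin : ∀ n : ℕ, FiniteDimensional K (𝒜 n))
    (Λ : Subring R)
    (hΛgr : ∀ x ∈ Λ, ∀ n : ℕ, (DirectSum.decompose 𝒜 x n : R) ∈ Λ)
    (hΛK : ∀ x : K, algebraMap K R x ∈ Λ ↔ (0 : WithTop Γ) ≤ v x)
    (hlat : ∀ n : ℕ,
      (∃ s : Set R, s ⊆ (Λ : Set R) ∩ (𝒜 n : Set R) ∧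
        LinearIndependent K ((↑) : s → R) ∧ Submodule.span K s = 𝒜 n) ∧
      (∃ t : Finset R, (↑t : Set R) ⊆ (𝒜 n : Set R) ∧
        (Λ : Set R) ∩ (𝒜 n : Set R) ⊆ (scaledSet R v 0 (↑t : Set R) : Set R)))
    (S : Submonoid R) [OreLocalization.OreSet S] :
    ((1 : R) ∈ oreInter K Λ S) ∧
    (∀ x ∈ oreInter K Λ S, ∀ y ∈ oreInter K Λ S, x * y ∈ oreInter K Λ S) ∧
    (∀ a ∈ Λ, ∀ s ∈ oreInter K Λ S,
      ∃ a' ∈ Λ, ∃ s' ∈ oreInter K Λ S, s' * a = a' * s) ∧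
    (∀ s ∈ oreInter K Λ S, IsUnit (OreLocalization.numeratorRingHom (S := S) s)) ∧
    (∀ q : R[S⁻¹], ∃ a ∈ Λ, ∃ s ∈ oreInter K Λ S,
      (OreLocalization.numeratorRingHom (S := S) s) * q =
        OreLocalization.numeratorRingHom (S := S) a) := by
  classical
  -- valuation of 1 is 0
  have hv1 : v 1 = 0 := by
    have h := hmul 1 1
    rw [one_mul] at h
    have hne : v 1 ≠ ⊤ := by simp [h0]
    lift v 1 to Γ using hne with γ1 hγ1
    rw [← WithTop.coe_add, WithTop.coe_eq_coe] at h
    exact_mod_cast congrArg (fun x : Γ => (x : WithTop Γ)) (left_eq_add.mp h)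
  -- every nonzero element has a valuation in Γ
  have hval : ∀ c : K, c ≠ 0 → ∃ δ : Γ, v c = (δ : WithTop Γ) := by
    intro c hc
    have : v c ≠ ⊤ := fun h => hc ((h0 c).mp h)
    exact ⟨(v c).untop this, ((WithTop.untop_eq_iff this).mp rfl).symm.symm⟩
  -- valuation of inverse
  have hvinv : ∀ (c : K) (δ : Γ), c ≠ 0 → v c = (δ : WithTop Γ) →
      v c⁻¹ = ((-δ : Γ) : WithTop Γ) := by
    intro c δ hc hδ
    have h := hmul c c⁻¹
    rw [mul_inv_cancel₀ hc, hv1, hδ] at h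
    obtain ⟨e, he⟩ := hval c⁻¹ (inv_ne_zero hc)
    rw [he, ← WithTop.coe_add, ← WithTop.coe_zero, WithTop.coe_eq_coe] at h
    rw [he, WithTop.coe_eq_coe]
    exact eq_neg_of_add_eq_zero_right h.symm
  -- `Λ` spans `R` over `K`
  have hspan : ∀ r : R, r ∈ Submodule.span K (Λ : Set R) := by
    intro r
    rw [← DirectSum.sum_support_decompose 𝒜 r]
    apply Submodule.sum_mem
    intro n _
    obtain ⟨⟨sn, hsn, _, hspn⟩, _⟩ := hlat n
    have h1 : (DirectSum.decompose 𝒜 r n : R) ∈ Submodule.span K sn := by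
      rw [hspn]; exact (DirectSum.decompose 𝒜 r n).2
    exact Submodule.span_mono (fun x hx => (hsn hx).1) h1
  -- every element of `R` can be scaled into `Λ` by any scalar of large enough valuation
  have claimB : ∀ r : R, ∃ γ : Γ, ∀ k : K, ((γ : WithTop Γ)) ≤ v k →
      algebraMap K R k * r ∈ Λ := by
    intro r
    induction hspan r using Submodule.span_induction with
    | mem x hx =>
      refine ⟨0, fun k hk => Λ.mul_mem ((hΛK k).mpr ?_) hx⟩
      simpa using hk
    | zero => exact ⟨0, fun k _ => by rw [mul_zero]; exact Λ.zero_mem⟩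
    | add x y hx hy ihx ihy =>
      obtain ⟨γ₁, h₁⟩ := ihx
      obtain ⟨γ₂, h₂⟩ := ihy
      refine ⟨max γ₁ γ₂, fun k hk => ?_⟩
      rw [mul_add]
      exact Λ.add_mem (h₁ k (le_trans (by exact_mod_cast le_max_left γ₁ γ₂) hk))
        (h₂ k (le_trans (by exact_mod_cast le_max_right γ₁ γ₂) hk))
    | smul c x hx ih =>
      obtain ⟨γx, hγx⟩ := ih
      by_cases hc : c = 0
      · exact ⟨0, fun k _ => by rw [hc, zero_smul, mul_zero]; exact Λ.zero_mem⟩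
      · obtain ⟨δ, hδ⟩ := hval c hc
        refine ⟨γx - δ, fun k hk => ?_⟩
        have key : algebraMap K R k * (c • x) = algebraMap K R (k * c) * x := by
          rw [Algebra.smul_def, map_mul, mul_assoc]
        rw [key]
        apply hγx
        rw [hmul, hδ]
        calc ((γx : WithTop Γ)) = ((γx - δ : Γ) : WithTop Γ) + (δ : WithTop Γ) := by
              rw [← WithTop.coe_add]; congr 1; abel
          _ ≤ v k + (δ : WithTop Γ) := add_le_add_left hk _
  -- simultaneous scaling of two elements, by a nonzero scalar
  have claim2 : ∀ r₁ r₂ : R, ∃ k : K, k ≠ 0 ∧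
      algebraMap K R k * r₁ ∈ Λ ∧ algebraMap K R k * r₂ ∈ Λ ∧
      ∃ δ : Γ, v k = (δ : WithTop Γ) := by
    intro r₁ r₂
    obtain ⟨γ₁, h₁⟩ := claimB r₁
    obtain ⟨γ₂, h₂⟩ := claimB r₂
    obtain ⟨k, hk⟩ := hsurj (max γ₁ γ₂)
    have hk0 : k ≠ 0 := by
      intro h; rw [h, (h0 0).mpr rfl] at hk; exact (WithTop.coe_ne_top hk.symm)
    exact ⟨k, hk0,
      h₁ k (hk ▸ by exact_mod_cast le_max_left γ₁ γ₂),
      h₂ k (hk ▸ by exact_mod_cast le_max_right γ₁ γ₂), max γ₁ γ₂, hk⟩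
  refine ⟨?_, ?_, ?_, ?_, ?_⟩
  · -- 1 ∈ S'
    exact ⟨Λ.one_mem, 1, one_ne_zero, 1, S.one_mem, by simp⟩
  · -- multiplicative closure
    rintro x ⟨hxΛ, c, hc, s, hs, rfl⟩ y ⟨hyΛ, d, hd, t, ht, rfl⟩
    refine ⟨Λ.mul_mem hxΛ hyΛ, c * d, mul_ne_zero hc hd, s * t, S.mul_mem hs ht, ?_⟩
    rw [map_mul]
    calc algebraMap K R c * s * (algebraMap K R d * t)
        = algebraMap K R c * (s * algebraMap K R d) * t := by noncomm_ring
      _ = algebraMap K R c * (algebraMap K R d * s) * t := by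
          rw [← Algebra.commutes]
      _ = algebraMap K R c * algebraMap K R d * (s * t) := by noncomm_ring
  · -- Ore condition in Λ
    rintro a haΛ s ⟨hsΛ, c, hc, t, ht, rfl⟩
    obtain ⟨a₀, t', hOre⟩ := OreLocalization.oreCondition a (⟨t, ht⟩ : S)
    obtain ⟨δ, hδ⟩ := hval c hc
    obtain ⟨γ₁, h₁⟩ := claimB (t' : R)
    obtain ⟨γ₂, h₂⟩ := claimB a₀
    obtain ⟨k, hk⟩ := hsurj (max γ₁ (γ₂ + δ))
    have hk0 : k ≠ 0 := by
      intro h; rw [h, (h0 0).mpr rfl] at hk; exact (WithTop.coe_ne_top hk.symm)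
    have hmem₁ : algebraMap K R k * (t' : R) ∈ Λ :=
      h₁ k (hk ▸ by exact_mod_cast le_max_left _ _)
    have hmem₂ : algebraMap K R (k * c⁻¹) * a₀ ∈ Λ := by
      apply h₂
      rw [hmul, hk, hvinv c δ hc hδ, ← WithTop.coe_add, WithTop.coe_le_coe]
      calc γ₂ = γ₂ + δ + -δ := by abel
        _ ≤ max γ₁ (γ₂ + δ) + -δ := add_le_add_left (le_max_right _ _) _
    refine ⟨algebraMap K R (k * c⁻¹) * a₀, hmem₂,
      algebraMap K R k * (t' : R), ⟨hmem₁, k, hk0, t', t'.2, rfl⟩, ?_⟩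
    calc algebraMap K R k * (t' : R) * a = algebraMap K R k * ((t' : R) * a) := by noncomm_ring
      _ = algebraMap K R k * (a₀ * t) := by rw [hOre]
      _ = algebraMap K R (k * c⁻¹ * c) * (a₀ * t) := by
          rw [mul_assoc, inv_mul_cancel₀ hc, mul_one]
      _ = algebraMap K R (k * c⁻¹) * (algebraMap K R c * a₀) * t := by
          rw [map_mul]; noncomm_ring
      _ = algebraMap K R (k * c⁻¹) * (a₀ * algebraMap K R c) * t := by
          rw [Algebra.commutes c a₀]
      _ = algebraMap K R (k * c⁻¹) * a₀ * (algebraMap K R c * t) := by noncomm_ring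
  · -- elements of S' become units
    rintro s ⟨hsΛ, c, hc, t, ht, rfl⟩
    rw [map_mul]
    apply IsUnit.mul
    · apply IsUnit.map
      exact isUnit_iff_exists.mpr ⟨algebraMap K R c⁻¹,
        by rw [← map_mul, mul_inv_cancel₀ hc, map_one],
        by rw [← map_mul, inv_mul_cancel₀ hc, map_one]⟩
    · exact OreLocalization.numerator_isUnit (⟨t, ht⟩ : S)
  · -- every element of S⁻¹R is a fraction over Λ by S'
    intro q
    induction q using OreLocalization.ind with
    | _ r t =>
      obtain ⟨k, hk0, hkr, hkt, _⟩ := claim2 r (t : R)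
      refine ⟨algebraMap K R k * r, hkr,
        algebraMap K R k * (t : R), ⟨hkt, k, hk0, t, t.2, rfl⟩, ?_⟩
      have h1 : (OreLocalization.numeratorRingHom (S := S)) (algebraMap K R k * (t : R)) =
          (OreLocalization.numeratorRingHom (S := S)) (algebraMap K R k) *
            (OreLocalization.numeratorRingHom (S := S)) (t : R) := map_mul _ _ _
      have h2 : (OreLocalization.numeratorRingHom (S := S)) ((t : R)) * (r /ₒ t) =
          (OreLocalization.numeratorRingHom (S := S)) r := by
        show OreLocalization.numeratorHom (t : R) * (r /ₒ t) = OreLocalization.numeratorHom r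
        rw [OreLocalization.numeratorHom_apply, OreLocalization.numeratorHom_apply]
        exact OreLocalization.mul_cancel (s := t) (t := 1)
      rw [h1, mul_assoc, h2, ← map_mul]
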